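/- For any β ≥ 0, ε > 0, if m ≥ 32β + ln(1/ε), then for all E ∈ [-2,2], the degree-m Taylor polynomial of exp(-βE) around 0 approximates exp(-βE) to error at most ε: |exp(-βE) − Σ_{j=0}^m (-βE)^j/j!| ≤ ε. -/

import Mathlib

open BigOperators

open Finset in
lemma exp_taylor_tail_aux (x : ℝ) (n : ℕ) :
    |Real.exp x - ∑ j ∈ Finset.range n, x ^ j / (Nat.factorial j : ℝ)| ≤
      Real.exp |x| - ∑ j ∈ Finset.range n, |x| ^ j / (Nat.factorial j : ℝ) := by
  have hs : Summable (fun j : ℕ => x ^ j / (Nat.factorial j : ℝ)) :=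
    Real.summable_pow_div_factorial x
  have hs' : Summable (fun j : ℕ => |x| ^ j / (Nat.factorial j : ℝ)) :=
    Real.summable_pow_div_factorial |x|
  have hexp : ∀ y : ℝ, Real.exp y = ∑' j : ℕ, y ^ j / (Nat.factorial j : ℝ) := by
    intro y
    rw [Real.exp_eq_exp_ℝ, NormedSpace.exp_eq_tsum_div]
  have h1 : Real.exp x - ∑ j ∈ Finset.range n, x ^ j / (Nat.factorial j : ℝ) =
      ∑' k : ℕ, x ^ (k + n) / (Nat.factorial (k + n) : ℝ) := by
    rw [hexp x, ← Summable.sum_add_tsum_nat_add n hs]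
    ring
  have h2 : Real.exp |x| - ∑ j ∈ Finset.range n, |x| ^ j / (Nat.factorial j : ℝ) =
      ∑' k : ℕ, |x| ^ (k + n) / (Nat.factorial (k + n) : ℝ) := by
    rw [hexp |x|, ← Summable.sum_add_tsum_nat_add n hs']
    ring
  have hnorm : (fun k : ℕ => ‖x ^ (k + n) / (Nat.factorial (k + n) : ℝ)‖) =
      fun k : ℕ => |x| ^ (k + n) / (Nat.factorial (k + n) : ℝ) := by
    funext k
    rw [Real.norm_eq_abs, abs_div, abs_pow, Nat.abs_cast]
  have hsadd : Summable (fun k : ℕ => ‖x ^ (k + n) / (Nat.factorial (k + n) : ℝ)‖) := by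
    rw [hnorm]
    exact (summable_nat_add_iff n).2 hs'
  calc |Real.exp x - ∑ j ∈ Finset.range n, x ^ j / (Nat.factorial j : ℝ)|
      ≤ ∑' k : ℕ, ‖x ^ (k + n) / (Nat.factorial (k + n) : ℝ)‖ := by
        rw [h1]; exact norm_tsum_le_tsum_norm hsadd
    _ = ∑' k : ℕ, |x| ^ (k + n) / (Nat.factorial (k + n) : ℝ) := by rw [hnorm]
    _ = Real.exp |x| - ∑ j ∈ Finset.range n, |x| ^ j / (Nat.factorial j : ℝ) := h2.symm

lemma pow_le_three_pow_mul_factorial (n : ℕ) :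
    (n : ℝ) ^ n ≤ 3 ^ n * (Nat.factorial n : ℝ) := by
  induction n with
  | zero => norm_num
  | succ n ih =>
    have key : ((n + 1 : ℕ) : ℝ) ^ n ≤ 3 * (n : ℝ) ^ n := by
      rcases Nat.eq_zero_or_pos n with h | h
      · subst h; norm_num
      · have hn : (0 : ℝ) < n := by exact_mod_cast h
        have h1 : ((n + 1 : ℕ) : ℝ) = (n : ℝ) * (1 + 1 / n) := by
          field_simp
          push_cast
          ring
        rw [h1, mul_pow]
        have h2 : (1 + 1 / (n : ℝ)) ^ n ≤ 3 := by
          have := Real.add_one_le_exp (1 / (n : ℝ))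
          calc (1 + 1 / (n : ℝ)) ^ n ≤ (Real.exp (1 / n)) ^ n := by
                apply pow_le_pow_left₀ (by positivity) (by linarith)
            _ = Real.exp ((n : ℝ) * (1 / n)) := by rw [← Real.exp_nat_mul]
            _ = Real.exp 1 := by rw [mul_one_div, div_self hn.ne']
            _ ≤ 3 := by linarith [Real.exp_one_lt_d9.le]
        calc (n : ℝ) ^ n * (1 + 1 / n) ^ n ≤ (n : ℝ) ^ n * 3 := by
              apply mul_le_mul_of_nonneg_left h2 (by positivity)
          _ = 3 * (n : ℝ) ^ n := by ring
    have hfac : (Nat.factorial (n + 1) : ℝ) = ((n + 1 : ℕ) : ℝ) * (Nat.factorial n : ℝ) := by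
      rw [Nat.factorial_succ]; push_cast; ring
    calc ((n + 1 : ℕ) : ℝ) ^ (n + 1) = ((n + 1 : ℕ) : ℝ) ^ n * ((n + 1 : ℕ) : ℝ) := by ring
      _ ≤ 3 * (n : ℝ) ^ n * ((n + 1 : ℕ) : ℝ) := by
          apply mul_le_mul_of_nonneg_right key (by positivity)
      _ ≤ 3 * (3 ^ n * (Nat.factorial n : ℝ)) * ((n + 1 : ℕ) : ℝ) := by
          apply mul_le_mul_of_nonneg_right (by linarith) (by positivity)
      _ = 3 ^ (n + 1) * (Nat.factorial (n + 1) : ℝ) := by rw [hfac]; ring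

lemma real_exp_bound_aux {x : ℝ} {n : ℕ} (hx : |x| / (n + 1) ≤ 1 / 2) :
    |Real.exp x - ∑ j ∈ Finset.range n, x ^ j / (Nat.factorial j : ℝ)| ≤
      |x| ^ n / (Nat.factorial n : ℝ) * 2 := by
  have hxc : ‖(x : ℂ)‖ / (n.succ : ℝ) ≤ 1 / 2 := by
    rwa [Complex.norm_real, Real.norm_eq_abs, Nat.cast_succ]
  have := Complex.exp_bound' hxc
  have heq : ‖((Complex.exp x) - ∑ j ∈ Finset.range n, (x : ℂ) ^ j /
      (Nat.factorial j : ℂ))‖ =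
      |Real.exp x - ∑ j ∈ Finset.range n, x ^ j / (Nat.factorial j : ℝ)| := by
    rw [← Real.norm_eq_abs, ← Complex.norm_real]
    congr 1
    push_cast [Complex.ofReal_exp]
    ring
  rw [heq, Complex.norm_real, Real.norm_eq_abs] at this
  exact this

/-- For `β ≥ 0`, `ε > 0`, if `m ≥ 32β + ln(1/ε)`, then for all `E ∈ [-2,2]`,
`|exp(-βE) − ∑_{j=0}^m (-βE)^j / j!| ≤ ε`. -/
theorem exp_taylor_uniform_bound (β ε : ℝ) (hβ : 0 ≤ β) (hε : 0 < ε)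
    (m : ℕ) (hm : 32 * β + Real.log (1 / ε) ≤ (m : ℝ)) :
    ∀ E ∈ Set.Icc (-2 : ℝ) 2,
      |Real.exp (-β * E) -
        ∑ j ∈ Finset.range (m + 1), (-β * E) ^ j / (Nat.factorial j : ℝ)| ≤ ε := by
  intro E hE
  set x : ℝ := -β * E with hxdef
  have hEabs : |E| ≤ 2 := abs_le.2 ⟨hE.1, hE.2⟩
  have hxabs : |x| ≤ 2 * β := by
    rw [hxdef, abs_mul, abs_neg, abs_of_nonneg hβ]
    nlinarith [abs_nonneg E]
  -- ε ≥ exp (32β - m)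
  have hε' : Real.exp (32 * β - m) ≤ ε := by
    have hlog : Real.log (1 / ε) ≤ (m : ℝ) - 32 * β := by linarith
    have h1 : 1 / ε ≤ Real.exp ((m : ℝ) - 32 * β) := by
      calc 1 / ε = Real.exp (Real.log (1 / ε)) := (Real.exp_log (by positivity)).symm
        _ ≤ Real.exp ((m : ℝ) - 32 * β) := Real.exp_le_exp.2 hlog
    have h2 : 1 ≤ Real.exp ((m : ℝ) - 32 * β) * ε := by
      rw [div_le_iff₀ hε] at h1
      exact h1
    have h3 : Real.exp (32 * β - m) * Real.exp ((m : ℝ) - 32 * β) = 1 := by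
      rw [← Real.exp_add]
      norm_num
    nlinarith [Real.exp_pos ((m : ℝ) - 32 * β), Real.exp_pos (32 * β - (m : ℝ))]
  rcases le_or_gt (30 * β) (m : ℝ) with hcase | hcase
  · -- main case : use the quantitative remainder bound with n = m + 1
    have hmpos : (0 : ℝ) < (m : ℝ) + 1 + 1 := by positivity
    have hcond : |x| / (((m + 1 : ℕ) : ℝ) + 1) ≤ 1 / 2 := by
      rw [div_le_iff₀ (by positivity)]
      push_cast
      nlinarith
    refine le_trans (real_exp_bound_aux hcond) ?_
    -- now bound |x|^(m+1) / (m+1)! * 2 ≤ ε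
    have hfacpos : (0 : ℝ) < (Nat.factorial (m + 1) : ℝ) := by
      exact_mod_cast Nat.factorial_pos (m + 1)
    have hfac := pow_le_three_pow_mul_factorial (m + 1)
    have step1 : |x| ^ (m + 1) ≤ (2 * β) ^ (m + 1) :=
      pow_le_pow_left₀ (abs_nonneg x) hxabs _
    have step2 : (2 * β) ^ (m + 1) / (Nat.factorial (m + 1) : ℝ) ≤
        (6 * β / (((m : ℝ) + 1))) ^ (m + 1) := by
      rw [div_pow, div_le_div_iff₀ hfacpos (by positivity)]
      have hcast : ((m + 1 : ℕ) : ℝ) = (m : ℝ) + 1 := by push_cast; ring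
      rw [hcast] at hfac
      calc (2 * β) ^ (m + 1) * ((m : ℝ) + 1) ^ (m + 1)
          ≤ (2 * β) ^ (m + 1) * (3 ^ (m + 1) * (Nat.factorial (m + 1) : ℝ)) := by
            apply mul_le_mul_of_nonneg_left hfac (by positivity)
        _ = (6 * β) ^ (m + 1) * (Nat.factorial (m + 1) : ℝ) := by
            rw [← mul_assoc, ← mul_pow]
            congr 2
            ring
    have step3 : (6 * β / ((m : ℝ) + 1)) ^ (m + 1) ≤ (1 / 5 : ℝ) ^ (m + 1) := by
      apply pow_le_pow_left₀ (by positivity)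
      rw [div_le_div_iff₀ (by positivity) (by norm_num)]
      linarith
    have step4 : ((1 / 5 : ℝ)) ^ (m + 1) ≤ (Real.exp (-1)) ^ (m + 1) := by
      apply pow_le_pow_left₀ (by norm_num)
      rw [Real.exp_neg, le_inv_comm₀ (by norm_num) (Real.exp_pos 1)]
      · linarith [Real.exp_one_lt_d9.le]
    have step5 : (Real.exp (-1)) ^ (m + 1) = Real.exp (-((m : ℝ) + 1)) := by
      rw [← Real.exp_nat_mul]
      congr 1
      push_cast
      ring
    have step6 : 2 * Real.exp (-((m : ℝ) + 1)) ≤ Real.exp (-(m : ℝ)) := by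
      have h2e : (2 : ℝ) ≤ Real.exp 1 := by linarith [Real.add_one_le_exp (1 : ℝ)]
      have : Real.exp (-((m : ℝ) + 1)) * Real.exp 1 = Real.exp (-(m : ℝ)) := by
        rw [← Real.exp_add]; congr 1; ring
      nlinarith [Real.exp_pos (-((m : ℝ) + 1))]
    have step7 : Real.exp (-(m : ℝ)) ≤ ε := by
      refine le_trans ?_ hε'
      apply Real.exp_le_exp.2
      linarith
    calc |x| ^ (m + 1) / (Nat.factorial (m + 1) : ℝ) * 2
        ≤ (2 * β) ^ (m + 1) / (Nat.factorial (m + 1) : ℝ) * 2 := by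
          gcongr
      _ ≤ (6 * β / ((m : ℝ) + 1)) ^ (m + 1) * 2 := by
          apply mul_le_mul_of_nonneg_right step2 (by norm_num)
      _ ≤ (1 / 5 : ℝ) ^ (m + 1) * 2 := by
          apply mul_le_mul_of_nonneg_right step3 (by norm_num)
      _ ≤ (Real.exp (-1)) ^ (m + 1) * 2 := by
          apply mul_le_mul_of_nonneg_right step4 (by norm_num)
      _ = 2 * Real.exp (-((m : ℝ) + 1)) := by rw [step5]; ring
      _ ≤ Real.exp (-(m : ℝ)) := step6
      _ ≤ ε := step7
  · -- degenerate case m < 30β : crude bound suffices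
    refine le_trans (exp_taylor_tail_aux x (m + 1)) ?_
    have hsum1 : (1 : ℝ) ≤ ∑ j ∈ Finset.range (m + 1), |x| ^ j / (Nat.factorial j : ℝ) := by
      have h0 : |x| ^ 0 / (Nat.factorial 0 : ℝ) = 1 := by norm_num
      calc (1 : ℝ) = |x| ^ 0 / (Nat.factorial 0 : ℝ) := h0.symm
        _ ≤ ∑ j ∈ Finset.range (m + 1), |x| ^ j / (Nat.factorial j : ℝ) :=
          Finset.single_le_sum (f := fun j => |x| ^ j / (Nat.factorial j : ℝ))
            (fun i _ => by positivity) (Finset.mem_range.2 (Nat.succ_pos m))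
    have hexple : Real.exp |x| ≤ Real.exp (32 * β - m) := by
      apply Real.exp_le_exp.2
      linarith
    linarith
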